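/- Let 1 ≤ k ≤ n and let B be an n×n complex Hermitian matrix with B ∈ Γ_I. Then 𝒬_k(B) equals the maximum, over all n×k complex matrices K satisfying KᴴK = I_k and such that KᴴBK is a diagonal matrix diag(λ''₁, …, λ''_k), of Σ_{i=1}^{k} arccot(λ''ᵢ). That is: every such K satisfies Σ_{i=1}^{k} arccot(λ''ᵢ) ≤ 𝒬_k(B), and there exists such a K achieving equality. -/

import Mathlib

open Real Matrix

/-- `arccot x = π/2 - arctan x`, a strictly decreasing bijection from `ℝ` onto `(0, π)`. -/
noncomputable def arccot (x : ℝ) : ℝ := π / 2 - Real.arctan x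

/-- `𝒬_{k,n}(λ)`: the maximum over subsets `J ⊆ {1,…,n}` with `|J| = k` of
`∑_{j ∈ J} arccot (λ j)`. -/
noncomputable def Qfun (n k : ℕ) (lam : Fin n → ℝ) : ℝ :=
  sSup {x : ℝ | ∃ s : Finset (Fin n), s.card = k ∧ x = ∑ i ∈ s, arccot (lam i)}

noncomputable def extendZero {k : ℕ} (T : Finset (Fin k)) : (↥T → ℂ) →ₗ[ℂ] (Fin k → ℂ) where
  toFun w a := if h : a ∈ T then w ⟨a, h⟩ else 0
  map_add' w₁ w₂ := by ext a; by_cases h : a ∈ T <;> simp [h]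
  map_smul' c w := by ext a; by_cases h : a ∈ T <;> simp [h]

lemma exists_ker {i j : ℕ} (hij : j < i)
    (V W : Type) [Fintype V] [Fintype W] (hV : Fintype.card V = i) (hW : Fintype.card W = j)
    (L : (V → ℂ) →ₗ[ℂ] (W → ℂ)) : ∃ w, w ≠ 0 ∧ L w = 0 := by
  by_contra hcon
  push_neg at hcon
  have hinj : Function.Injective L := by
    rw [← LinearMap.ker_eq_bot, Submodule.eq_bot_iff]
    intro w hw
    by_contra hw0
    exact hw0 (hcon w (fun h => hw0 h) |> absurd hw)
  have := LinearMap.finrank_le_finrank_of_injective hinj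
  rw [Module.finrank_fintype_fun_eq_card, Module.finrank_fintype_fun_eq_card, hV, hW] at this
  omega

lemma rayleigh_core {n k : ℕ} (B : Matrix (Fin n) (Fin n) ℂ) (hB : B.IsHermitian)
    (K : Matrix (Fin n) (Fin k) ℂ) (d : Fin k → ℝ)
    (hK : Kᴴ * K = 1) (hKBK : Kᴴ * B * K = Matrix.diagonal (fun i => (d i : ℂ)))
    (T : Finset (Fin k)) (J : Finset (Fin n)) (hTJ : J.card < T.card)
    (μ ν : ℝ) (hμ : ∀ a ∈ T, d a ≤ μ) (hν : ∀ j ∉ J, ν ≤ hB.eigenvalues j) :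
    ν ≤ μ := by
  set lam := hB.eigenvalues with hlam
  set U : Matrix (Fin n) (Fin n) ℂ := (hB.eigenvectorUnitary : Matrix (Fin n) (Fin n) ℂ) with hU
  have hU1 : Uᴴ * U = 1 := by
    rw [← Matrix.star_eq_conjTranspose]
    exact Unitary.coe_star_mul_self hB.eigenvectorUnitary
  have hU2 : U * Uᴴ = 1 := by
    rw [← Matrix.star_eq_conjTranspose]
    exact Unitary.coe_mul_star_self hB.eigenvectorUnitary
  set D : Matrix (Fin n) (Fin n) ℂ := Matrix.diagonal (fun j => (lam j : ℂ)) with hD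
  have hUBU : Uᴴ * B * U = D := by
    rw [← Matrix.star_eq_conjTranspose]
    have := hB.conjStarAlgAut_star_eigenvectorUnitary
    rw [Unitary.conjStarAlgAut_star_apply] at this
    rw [this]; rfl
  -- get the test vector
  obtain ⟨w, hw0, hwker⟩ := exists_ker hTJ ↥T ↥J (Fintype.card_coe T) (Fintype.card_coe J)
    ((LinearMap.funLeft ℂ ℂ (fun s : ↥J => (s : Fin n))).comp
      (((Uᴴ * K).mulVecLin).comp (extendZero T)))
  set v : Fin k → ℂ := extendZero T w with hv
  set y : Fin n → ℂ := (Uᴴ * K) *ᵥ v with hy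
  have hy0 : ∀ j ∈ J, y j = 0 := by
    intro j hj
    have := congrFun hwker ⟨j, hj⟩
    simpa using this
  have hvT : ∀ a ∉ T, v a = 0 := by
    intro a ha; simp [hv, extendZero, ha]
  have hvne : v ≠ 0 := by
    intro hcon
    apply hw0
    ext s
    have := congrFun hcon (s : Fin k)
    simpa [hv, extendZero, s.2] using this
  -- norm equality
  have hnorm : star y ⬝ᵥ y = star v ⬝ᵥ v := by
    rw [hy, star_mulVec, ← dotProduct_mulVec, mulVec_mulVec]
    congr 1
    rw [conjTranspose_mul, conjTranspose_conjTranspose, Matrix.mul_assoc,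
      ← Matrix.mul_assoc U, hU2, Matrix.one_mul, hK, Matrix.one_mulVec]
  -- Rayleigh quotient two ways
  have hBspec : B = U * D * Uᴴ := by
    have h := hB.spectral_theorem
    rw [h]; rfl
  have hR : star v ⬝ᵥ ((Kᴴ * B * K) *ᵥ v) = star y ⬝ᵥ (D *ᵥ y) := by
    have hfact : Kᴴ * B * K = (Uᴴ * K)ᴴ * D * (Uᴴ * K) := by
      rw [hBspec, conjTranspose_mul, conjTranspose_conjTranspose]
      simp only [Matrix.mul_assoc]
    rw [hfact, ← mulVec_mulVec, ← mulVec_mulVec, dotProduct_mulVec, ← star_mulVec, ← hy]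
  -- turn into real sums
  have hsum1 : star v ⬝ᵥ ((Kᴴ * B * K) *ᵥ v)
      = ((∑ a, d a * Complex.normSq (v a) : ℝ) : ℂ) := by
    rw [hKBK]
    simp only [dotProduct, mulVec_diagonal, Pi.star_apply, Complex.star_def]
    push_cast
    rw [Finset.sum_congr rfl (fun a _ => ?_)]
    rw [Complex.normSq_eq_conj_mul_self]; ring
  have hsum2 : star y ⬝ᵥ (D *ᵥ y) = ((∑ j, lam j * Complex.normSq (y j) : ℝ) : ℂ) := by
    simp only [hD, dotProduct, mulVec_diagonal, Pi.star_apply, Complex.star_def]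
    push_cast
    rw [Finset.sum_congr rfl (fun j _ => ?_)]
    rw [Complex.normSq_eq_conj_mul_self]; ring
  have hsum3 : star v ⬝ᵥ v = ((∑ a, Complex.normSq (v a) : ℝ) : ℂ) := by
    simp only [dotProduct, Pi.star_apply, Complex.star_def]
    push_cast
    rw [Finset.sum_congr rfl (fun a _ => ?_)]
    rw [Complex.normSq_eq_conj_mul_self]
  have hsum4 : star y ⬝ᵥ y = ((∑ j, Complex.normSq (y j) : ℝ) : ℂ) := by
    simp only [dotProduct, Pi.star_apply, Complex.star_def]
    push_cast
    rw [Finset.sum_congr rfl (fun j _ => ?_)]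
    rw [Complex.normSq_eq_conj_mul_self]
  have hRreal : ∑ a, d a * Complex.normSq (v a) = ∑ j, lam j * Complex.normSq (y j) := by
    have := hR; rw [hsum1, hsum2] at this; exact_mod_cast this
  have hNreal : ∑ j, Complex.normSq (y j) = ∑ a, Complex.normSq (v a) := by
    have := hnorm; rw [hsum3, hsum4] at this; exact_mod_cast this
  set S : ℝ := ∑ a, Complex.normSq (v a) with hS
  have hSpos : 0 < S := by
    obtain ⟨a, ha⟩ : ∃ a, v a ≠ 0 := by
      by_contra hc; push_neg at hc; exact hvne (funext hc)
    exact Finset.sum_pos' (fun a _ => Complex.normSq_nonneg _)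
      ⟨a, Finset.mem_univ a, Complex.normSq_pos.mpr ha⟩
  have hupper : ∑ a, d a * Complex.normSq (v a) ≤ μ * S := by
    rw [hS, Finset.mul_sum]
    apply Finset.sum_le_sum
    intro a _
    by_cases ha : a ∈ T
    · exact mul_le_mul_of_nonneg_right (hμ a ha) (Complex.normSq_nonneg _)
    · rw [hvT a ha]; simp
  have hlower : ν * S ≤ ∑ j, lam j * Complex.normSq (y j) := by
    rw [← hNreal, Finset.mul_sum]
    apply Finset.sum_le_sum
    intro j _
    by_cases hj : j ∈ J
    · rw [hy0 j hj]; simp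
    · exact mul_le_mul_of_nonneg_right (hν j hj) (Complex.normSq_nonneg _)
  have hνμ : ν * S ≤ μ * S := by
    calc ν * S ≤ ∑ j, lam j * Complex.normSq (y j) := hlower
    _ = ∑ a, d a * Complex.normSq (v a) := hRreal.symm
    _ ≤ μ * S := hupper
  exact le_of_mul_le_mul_right hνμ hSpos

lemma arccot_le_arccot {x y : ℝ} (h : x ≤ y) : arccot y ≤ arccot x := by
  unfold arccot
  have := Real.arctan_strictMono.monotone h
  linarith

theorem Qfun_variational (n k : ℕ) (hk : 1 ≤ k) (hkn : k ≤ n)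
    (B : Matrix (Fin n) (Fin n) ℂ) (hB : B.IsHermitian)
    (hΓ : (∑ i, arccot (hB.eigenvalues i)) < π) :
    (∀ (K : Matrix (Fin n) (Fin k) ℂ) (d : Fin k → ℝ),
        Kᴴ * K = 1 → Kᴴ * B * K = Matrix.diagonal (fun i => (d i : ℂ)) →
        (∑ i, arccot (d i)) ≤ Qfun n k hB.eigenvalues) ∧
    (∃ (K : Matrix (Fin n) (Fin k) ℂ) (d : Fin k → ℝ),
        Kᴴ * K = 1 ∧ Kᴴ * B * K = Matrix.diagonal (fun i => (d i : ℂ)) ∧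
        (∑ i, arccot (d i)) = Qfun n k hB.eigenvalues) := by
  clear hΓ hk
  set lam := hB.eigenvalues with hlam
  set Sset : Set ℝ := {x : ℝ | ∃ s : Finset (Fin n), s.card = k ∧ x = ∑ i ∈ s, arccot (lam i)}
    with hSset
  have hQ : Qfun n k lam = sSup Sset := rfl
  have hfin : Sset.Finite := by
    apply Set.Finite.subset (Set.finite_range (fun s : Finset (Fin n) => ∑ i ∈ s, arccot (lam i)))
    rintro x ⟨s, -, rfl⟩
    exact ⟨s, rfl⟩
  have hne : Sset.Nonempty := by
    obtain ⟨s, -, hcard⟩ := Finset.exists_subset_card_eq (s := (Finset.univ : Finset (Fin n))) (n := k)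
      (by simpa using hkn)
    exact ⟨_, s, hcard, rfl⟩
  constructor
  · -- upper bound
    intro K d hKK hKBK
    set σ := Tuple.sort d with hσ
    set τ := Tuple.sort lam with hτ
    have hkey : ∀ i : Fin k, lam (τ (Fin.castLE hkn i)) ≤ d (σ i) := by
      intro i
      apply rayleigh_core B hB K d hKK hKBK
        ((Finset.Iic i).image σ) ((Finset.Iio (Fin.castLE hkn i)).image τ)
      · rw [Finset.card_image_of_injective _ σ.injective,
          Finset.card_image_of_injective _ τ.injective, Fin.card_Iic, Fin.card_Iio]
        simp
      · intro a ha
        obtain ⟨t, ht, rfl⟩ := Finset.mem_image.mp ha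
        exact Tuple.monotone_sort d (Finset.mem_Iic.mp ht)
      · intro j hj
        have hns : ¬ (τ.symm j < Fin.castLE hkn i) := by
          intro hlt
          exact hj (Finset.mem_image.mpr ⟨τ.symm j, Finset.mem_Iio.mpr hlt, τ.apply_symm_apply j⟩)
        have : Fin.castLE hkn i ≤ τ.symm j := not_lt.mp hns
        have := Tuple.monotone_sort lam this
        exact (show (lam ∘ τ) (Fin.castLE hkn i) ≤ (lam ∘ τ) (τ.symm j) from this).trans_eq
          (congrArg lam (τ.apply_symm_apply j))
    have hsum : ∑ i, arccot (d i) ≤ ∑ i : Fin k, arccot (lam (τ (Fin.castLE hkn i))) := by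
      rw [← Equiv.sum_comp σ (fun i => arccot (d i))]
      exact Finset.sum_le_sum (fun i _ => arccot_le_arccot (hkey i))
    set J₀ : Finset (Fin n) := Finset.image (fun i : Fin k => τ (Fin.castLE hkn i)) Finset.univ
      with hJ₀
    have hginj : Function.Injective (fun i : Fin k => τ (Fin.castLE hkn i)) :=
      τ.injective.comp (Fin.castLE_injective hkn)
    have hJ₀card : J₀.card = k := by
      rw [hJ₀, Finset.card_image_of_injective _ hginj, Finset.card_univ, Fintype.card_fin]
    have hJ₀sum : ∑ j ∈ J₀, arccot (lam j) = ∑ i : Fin k, arccot (lam (τ (Fin.castLE hkn i))) :=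
      Finset.sum_image (fun a _ b _ h => hginj h)
    calc ∑ i, arccot (d i) ≤ ∑ j ∈ J₀, arccot (lam j) := by rw [hJ₀sum]; exact hsum
    _ ≤ Qfun n k lam := le_csSup hfin.bddAbove ⟨J₀, hJ₀card, rfl⟩
  · -- existence
    obtain ⟨s₀, hcard, heq⟩ := Set.Nonempty.csSup_mem hne hfin
    set U : Matrix (Fin n) (Fin n) ℂ := (hB.eigenvectorUnitary : Matrix (Fin n) (Fin n) ℂ)
      with hU
    have hU1 : Uᴴ * U = 1 := by
      rw [← Matrix.star_eq_conjTranspose]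
      exact Unitary.coe_star_mul_self hB.eigenvectorUnitary
    have hUBU : Uᴴ * B * U = Matrix.diagonal (fun j => (lam j : ℂ)) := by
      rw [← Matrix.star_eq_conjTranspose]
      have := hB.conjStarAlgAut_star_eigenvectorUnitary
      rw [Unitary.conjStarAlgAut_star_apply] at this
      rw [this]; rfl
    set g : Fin k → Fin n := fun q => ((s₀.orderIsoOfFin hcard) q : Fin n) with hg
    have hginj : Function.Injective g :=
      fun a b h => (s₀.orderIsoOfFin hcard).injective (Subtype.ext h)
    refine ⟨U.submatrix id g, fun q => lam (g q), ?_, ?_, ?_⟩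
    · rw [conjTranspose_submatrix]
      have : Uᴴ.submatrix g id * U.submatrix id g = (Uᴴ * U).submatrix g g := by
        ext p q; simp [Matrix.mul_apply]
      rw [this, hU1]
      ext p q
      simp [Matrix.one_apply, hginj.eq_iff]
    · rw [conjTranspose_submatrix]
      have h1 : Uᴴ.submatrix g id * B = (Uᴴ * B).submatrix g id := by
        ext p q; simp [Matrix.mul_apply]
      have h2 : (Uᴴ * B).submatrix g id * U.submatrix id g = (Uᴴ * B * U).submatrix g g := by
        ext p q; simp [Matrix.mul_apply]
      rw [h1, h2, hUBU]
      ext p q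
      by_cases hpq : p = q
      · subst hpq; simp
      · simp [Matrix.diagonal_apply, hpq, hginj.eq_iff]
    · rw [hQ, heq]
      have h3 : ∑ j ∈ s₀, arccot (lam j) = ∑ x : ↥s₀, arccot (lam ↑x) :=
        (Finset.sum_coe_sort s₀ _).symm
      rw [h3, ← Equiv.sum_comp (s₀.orderIsoOfFin hcard).toEquiv
        (fun x : ↥s₀ => arccot (lam ↑x))]
      rfl
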